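/- Let n ≥ 1 be an integer, let a, b, c, d be real numbers with b ≠ 0 and d ≠ 0, and let y : ℝ → ℝ be n times continuously differentiable. Define φ(x̄) = (x̄ − c(1 + a·x̄))/(b(1 + a·x̄)) and ȳ(x̄) = d·(1 + a·x̄)^{n−1}·y(φ(x̄)) on the set {x̄ : 1 + a·x̄ ≠ 0}. Then for every x̄ with 1 + a·x̄ ≠ 0, the n-th derivative of y at φ(x̄) equals (bⁿ·(1 + a·x̄)^{n+1}/d) times the n-th derivative of ȳ at x̄; that is, y⁽ⁿ⁾(φ(x̄)) = bⁿ(1 + a·x̄)^{n+1} ȳ⁽ⁿ⁾(x̄)/d. -/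

import Mathlib

open Topology Filter

section Helpers

private lemma iter_const_mul (n : ℕ) (C : ℝ) (f : ℝ → ℝ) (x : ℝ) :
    iteratedDeriv n (fun s => C * f s) x = C * iteratedDeriv n f x := by
  induction n generalizing x with
  | zero => simp
  | succ n ih =>
    rw [iteratedDeriv_succ, iteratedDeriv_succ]
    have h : iteratedDeriv n (fun s => C * f s) = fun s => C * iteratedDeriv n f s :=
      funext ih
    rw [h, deriv_const_mul_field]

private lemma diffAt_iter {u : ℝ → ℝ} {U : Set ℝ} (hU : IsOpen U) {N : ℕ}
    (hu : ContDiffOn ℝ N u U) {j : ℕ} (hj : j < N) {x : ℝ} (hx : x ∈ U) :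
    DifferentiableAt ℝ (iteratedDeriv j u) x := by
  have h1 : DifferentiableOn ℝ (iteratedDerivWithin j u U) U :=
    hu.differentiableOn_iteratedDerivWithin (by exact_mod_cast hj) hU.uniqueDiffOn
  have h2 : DifferentiableAt ℝ (iteratedDerivWithin j u U) x :=
    (h1 x hx).differentiableAt (hU.mem_nhds hx)
  have h3 : iteratedDerivWithin j u U =ᶠ[𝓝 x] iteratedDeriv j u := by
    filter_upwards [hU.mem_nhds hx] with z hz
    rw [iteratedDerivWithin_eq_iteratedFDerivWithin, iteratedDeriv_eq_iteratedFDeriv,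
      iteratedFDerivWithin_of_isOpen j hU hz]
  exact h3.differentiableAt_iff.mp h2

private lemma iter_mul_id {U : Set ℝ} (hU : IsOpen U) (k : ℕ) (u : ℝ → ℝ)
    (hu : ContDiffOn ℝ (k+1) u U) :
    ∀ x ∈ U, iteratedDeriv (k+1) (fun s => s * u s) x
      = x * iteratedDeriv (k+1) u x + (k+1) * iteratedDeriv k u x := by
  induction k with
  | zero =>
    intro x hx
    have hud : DifferentiableAt ℝ u x := by
      have := hu.differentiableOn (by norm_num) x hx
      exact this.differentiableAt (hU.mem_nhds hx)
    rw [iteratedDeriv_one, iteratedDeriv_one, iteratedDeriv_zero]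
    rw [deriv_fun_mul differentiableAt_fun_id hud]
    simp [deriv_id'']
    ring
  | succ k ih =>
    intro x hx
    have hloc : iteratedDeriv (k+1) (fun s => s * u s) =ᶠ[𝓝 x]
        fun z => z * iteratedDeriv (k+1) u z + (k+1 : ℝ) * iteratedDeriv k u z := by
      filter_upwards [hU.mem_nhds hx] with z hz
      exact_mod_cast ih (hu.of_le (by exact_mod_cast Nat.le_succ (k+1))) z hz
    rw [iteratedDeriv_succ, hloc.deriv_eq]
    have hA : DifferentiableAt ℝ (iteratedDeriv (k+1) u) x :=
      diffAt_iter hU hu (Nat.lt_succ_self _) hx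
    have hB : DifferentiableAt ℝ (iteratedDeriv k u) x :=
      diffAt_iter hU hu (show k < k+1+1 by omega) hx
    have h1 : HasDerivAt (fun z => z * iteratedDeriv (k+1) u z)
        (iteratedDeriv (k+1) u x + x * deriv (iteratedDeriv (k+1) u) x) x := by
      simpa using (hasDerivAt_id x).fun_mul hA.hasDerivAt
    have h2 : HasDerivAt (fun z => (k+1 : ℝ) * iteratedDeriv k u z)
        ((k+1 : ℝ) * deriv (iteratedDeriv k u) x) x := hB.hasDerivAt.const_mul _
    rw [(h1.fun_add h2).deriv]
    rw [← iteratedDeriv_succ, ← iteratedDeriv_succ]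
    push_cast
    ring

private lemma contDiffOn_inv_comp {f : ℝ → ℝ} {N : ℕ} (hf : ContDiff ℝ N f) (m : ℕ) :
    ContDiffOn ℝ N (fun s : ℝ => s ^ m * f s⁻¹) {z : ℝ | z ≠ 0} := by
  apply ContDiffOn.mul
  · exact (contDiff_id.pow m).contDiffOn
  · exact hf.comp_contDiffOn (contDiffOn_inv ℝ)

/-- The key inversion lemma: the `(m+1)`-st derivative of `s ↦ s^m f(1/s)` is
`(-1)^(m+1) x^(-(m+2)) f^{(m+1)}(1/x)`. -/
private lemma inv_key : ∀ (m : ℕ) (f : ℝ → ℝ), ContDiff ℝ (m+1 : ℕ) f → ∀ x : ℝ, x ≠ 0 →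
    iteratedDeriv (m+1) (fun s => s ^ m * f s⁻¹) x
      = (-1 : ℝ) ^ (m+1) * (x ^ (m+2))⁻¹ * iteratedDeriv (m+1) f x⁻¹ := by
  intro m
  induction m with
  | zero =>
    intro f hf x hx
    have hfun : (fun s : ℝ => s ^ 0 * f s⁻¹) = fun s => f s⁻¹ := by
      funext s; simp
    rw [hfun, iteratedDeriv_one, iteratedDeriv_one]
    have hdf : HasDerivAt (fun s : ℝ => f s⁻¹) (deriv f x⁻¹ * (-(x^2)⁻¹)) x :=
      ((hf.differentiable (by norm_num) x⁻¹).hasDerivAt).comp x (hasDerivAt_inv hx)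
    rw [hdf.deriv]
    ring
  | succ m ih =>
    intro f hf x hx
    set U : Set ℝ := {z : ℝ | z ≠ 0} with hUdef
    have hU : IsOpen U := isOpen_compl_singleton
    have hxU : x ∈ U := hx
    set u : ℝ → ℝ := fun s => s ^ m * f s⁻¹ with hudef
    have hfun : (fun s : ℝ => s ^ (m+1) * f s⁻¹) = fun s => s * u s := by
      funext s; simp [hudef]; ring
    have hu : ContDiffOn ℝ (m+1+1 : ℕ) u U := contDiffOn_inv_comp hf m
    rw [hfun, iter_mul_id hU (m+1) u hu x hxU]
    have hih : ∀ z ∈ U, iteratedDeriv (m+1) u z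
        = (-1 : ℝ) ^ (m+1) * (z ^ (m+2))⁻¹ * iteratedDeriv (m+1) f z⁻¹ :=
      fun z hz => ih f hf.of_succ z hz
    have hg : DifferentiableAt ℝ (iteratedDeriv (m+1) f) x⁻¹ :=
      (hf.differentiable_iteratedDeriv (m+1)
        (by exact_mod_cast Nat.lt_succ_self _)).differentiableAt
    have hpow : HasDerivAt (fun z : ℝ => (z ^ (m+2))⁻¹)
        (-((m+2 : ℝ) * x ^ (m+1)) / (x ^ (m+2)) ^ 2) x := by
      have h0 : HasDerivAt (fun z : ℝ => z ^ (m+2)) ((m+2 : ℝ) * x ^ (m+1)) x := by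
        simpa using hasDerivAt_pow (m+2) x
      simpa using h0.fun_inv (pow_ne_zero _ hx)
    have hcomp : HasDerivAt (fun z : ℝ => iteratedDeriv (m+1) f z⁻¹)
        (deriv (iteratedDeriv (m+1) f) x⁻¹ * (-(x^2)⁻¹)) x :=
      hg.hasDerivAt.comp x (hasDerivAt_inv hx)
    have hD : HasDerivAt
        (fun z : ℝ => (-1 : ℝ) ^ (m+1) * ((z ^ (m+2))⁻¹ * iteratedDeriv (m+1) f z⁻¹))
        ((-1 : ℝ) ^ (m+1) * ((-((m+2 : ℝ) * x ^ (m+1)) / (x ^ (m+2)) ^ 2)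
            * iteratedDeriv (m+1) f x⁻¹
          + (x ^ (m+2))⁻¹ * (deriv (iteratedDeriv (m+1) f) x⁻¹ * (-(x^2)⁻¹)))) x :=
      (hpow.mul hcomp).const_mul _
    have hu2 : iteratedDeriv (m+1+1) u x
        = (-1 : ℝ) ^ (m+1) * ((-((m+2 : ℝ) * x ^ (m+1)) / (x ^ (m+2)) ^ 2)
            * iteratedDeriv (m+1) f x⁻¹
          + (x ^ (m+2))⁻¹ * (deriv (iteratedDeriv (m+1) f) x⁻¹ * (-(x^2)⁻¹))) := by
      rw [iteratedDeriv_succ]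
      have hloc : iteratedDeriv (m+1) u =ᶠ[𝓝 x]
          fun z => (-1 : ℝ) ^ (m+1) * ((z ^ (m+2))⁻¹ * iteratedDeriv (m+1) f z⁻¹) := by
        filter_upwards [hU.mem_nhds hxU] with z hz
        rw [hih z hz]; ring
      rw [hloc.deriv_eq, hD.deriv]
    rw [hu2, hih x hxU, ← iteratedDeriv_succ]
    field_simp
    push_cast
    ring

end Helpers

/-- The point transformation of the independent variable:
`φ(x̄) = (x̄ − c(1 + a x̄)) / (b(1 + a x̄))`. -/
noncomputable def phi (a b c : ℝ) (x : ℝ) : ℝ :=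
  (x - c * (1 + a * x)) / (b * (1 + a * x))

/-- under the transformation `x = φ(x̄)`,
`ȳ(x̄) = d (1+a x̄)^(n-1) y(φ(x̄))`, the top-order derivative transforms as
`y⁽ⁿ⁾(φ(x̄)) = bⁿ (1+a x̄)^(n+1) ȳ⁽ⁿ⁾(x̄) / d`. -/
theorem stmt_1 (n : ℕ) (hn : 1 ≤ n) (a b c d : ℝ) (hb : b ≠ 0) (hd : d ≠ 0)
    (y : ℝ → ℝ) (hy : ContDiff ℝ (n : ℕ∞) y)
    (xb : ℝ) (ht : 1 + a * xb ≠ 0) :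
    iteratedDeriv n y (phi a b c xb)
      = b ^ n * (1 + a * xb) ^ (n + 1)
          * iteratedDeriv n
              (fun s => d * (1 + a * s) ^ (n - 1) * y (phi a b c s)) xb / d := by
  obtain ⟨m, rfl⟩ : ∃ m, n = m + 1 := ⟨n - 1, (Nat.succ_pred_eq_of_pos hn).symm⟩
  have hy' : ContDiff ℝ (m+1 : ℕ) y := by exact_mod_cast hy
  simp only [Nat.add_sub_cancel]
  by_cases ha : a = 0
  · -- affine case
    subst ha
    have hphi : ∀ s : ℝ, phi 0 b c s = b⁻¹ * s + -(c / b) := by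
      intro s
      simp only [phi]
      field_simp
      ring
    have hf0 : ContDiff ℝ (m+1 : ℕ) (fun z : ℝ => y (z + -(c / b))) :=
      hy'.comp (contDiff_id.add contDiff_const)
    have hfun : (fun s => d * (1 + 0 * s) ^ m * y (phi 0 b c s))
        = fun s => d * (fun z : ℝ => y (z + -(c / b))) (b⁻¹ * s) := by
      funext s
      simp only [hphi s, zero_mul, add_zero, one_pow, mul_one]
    rw [hfun, iter_const_mul, iteratedDeriv_comp_const_mul hf0,
      iteratedDeriv_comp_add_const]
    rw [hphi xb]
    have hbp : (b : ℝ) ^ (m+1) * (b⁻¹) ^ (m+1) = 1 := by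
      rw [← mul_pow, mul_inv_cancel₀ hb, one_pow]
    simp only [zero_mul, add_zero, one_pow]
    rw [mul_one, show b ^ (m+1) * (d * (b⁻¹ ^ (m+1)
        * iteratedDeriv (m+1) y (b⁻¹ * xb + -(c / b)))) / d
      = (b ^ (m+1) * b⁻¹ ^ (m+1))
          * iteratedDeriv (m+1) y (b⁻¹ * xb + -(c / b)) * (d / d) from by ring,
      hbp, div_self hd, one_mul, mul_one]
  · -- Möbius case
    have ha' : (a : ℝ) ≠ 0 := ha
    set α : ℝ := 1 / (a * b) - c / b with hα
    set β : ℝ := -1 / (a ^ 2 * b) with hβ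
    set g : ℝ → ℝ := fun w => y (α + β * w) with hgdef
    set τ : ℝ := xb + a⁻¹ with hτdef
    have hτa : 1 + a * xb = a * τ := by
      rw [hτdef]; field_simp; ring
    have hτ : τ ≠ 0 := by
      intro h0
      apply ht
      rw [hτa, h0, mul_zero]
    have hg : ContDiff ℝ (m+1 : ℕ) g :=
      hy'.comp (contDiff_const.add (contDiff_const.mul contDiff_id))
    have hopen : IsOpen {s : ℝ | 1 + a * s ≠ 0} :=
      isOpen_compl_singleton.preimage (by continuity)
    have harg : ∀ s : ℝ, 1 + a * s ≠ 0 → α + β * (s + a⁻¹)⁻¹ = phi a b c s := by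
      intro s hs
      have h1 : 1 + a * s = a * (s + a⁻¹) := by field_simp; ring
      have hsa : s + a⁻¹ ≠ 0 := by
        intro h0
        apply hs
        rw [h1, h0, mul_zero]
      have hinv : (s + a⁻¹)⁻¹ = a / (1 + a * s) := by
        rw [eq_div_iff hs, inv_mul_eq_div, div_eq_iff hsa, h1]
      rw [hinv]
      simp only [phi, hα, hβ]
      field_simp
      ring
    -- rewrite ȳ near xb as (d*a^m) * G (s + a⁻¹) with G s = s^m g s⁻¹
    set G : ℝ → ℝ := fun z => z ^ m * g z⁻¹ with hGdef
    have hEv : (fun s => d * (1 + a * s) ^ m * y (phi a b c s)) =ᶠ[𝓝 xb]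
        fun s => (d * a ^ m) * G (s + a⁻¹) := by
      filter_upwards [hopen.mem_nhds ht] with s hs
      have h1 : (1 + a * s) = a * (s + a⁻¹) := by field_simp; ring
      have h2 : g (s + a⁻¹)⁻¹ = y (phi a b c s) := by
        show y (α + β * (s + a⁻¹)⁻¹) = y (phi a b c s)
        rw [harg s hs]
      show d * (1 + a * s) ^ m * y (phi a b c s)
          = (d * a ^ m) * ((s + a⁻¹) ^ m * g (s + a⁻¹)⁻¹)
      rw [← h2, h1, mul_pow]
      ring
    rw [hEv.iteratedDeriv_eq, iter_const_mul, iteratedDeriv_comp_add_const]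
    beta_reduce
    rw [show xb + a⁻¹ = τ from rfl, hGdef, inv_key m g hg τ hτ]
    -- iterated derivative of g in terms of y
    have hgiter : iteratedDeriv (m+1) g τ⁻¹
        = β ^ (m+1) * iteratedDeriv (m+1) y (phi a b c xb) := by
      have hy0 : ContDiff ℝ (m+1 : ℕ) (fun z : ℝ => y (α + z)) :=
        hy'.comp (contDiff_const.add contDiff_id)
      have hgg : g = fun w => (fun z : ℝ => y (α + z)) (β * w) := by
        funext w; simp [hgdef]
      rw [hgg, iteratedDeriv_comp_const_mul hy0, iteratedDeriv_comp_const_add]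
      beta_reduce
      rw [hτdef, harg xb ht]
    rw [hgiter, hτa]
    -- final scalar algebra
    set K := iteratedDeriv (m+1) y (phi a b c xb) with hK
    have e1 : ((-1:ℝ) ^ (m+1)) * (β ^ (m+1)) = ((a^2*b)⁻¹) ^ (m+1) := by
      rw [hβ, ← mul_pow]
      congr 1
      field_simp
    have e2 : ((a^2*b : ℝ)) ^ (m+1) = b ^ (m+1) * a ^ (m+2) * a ^ m := by
      rw [mul_pow]; ring
    have e3 : ((a^2*b : ℝ)⁻¹) ^ (m+1) * (b ^ (m+1) * a ^ (m+2) * a ^ m) = 1 := by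
      rw [inv_pow, ← e2, inv_mul_cancel₀ (pow_ne_zero _ (mul_ne_zero (pow_ne_zero _ ha') hb))]
    calc K = (((-1:ℝ) ^ (m+1)) * (β ^ (m+1))
              * (b ^ (m+1) * a ^ (m+2) * a ^ m)
              * (τ ^ (m+2) * (τ ^ (m+2))⁻¹) * (d / d)) * K := by
            rw [e1, mul_inv_cancel₀ (pow_ne_zero _ hτ), div_self hd, e3]
            ring
      _ = b ^ (m+1) * (a * τ) ^ (m+2)
            * (d * a ^ m * ((-1:ℝ) ^ (m+1) * (τ ^ (m+2))⁻¹ * (β ^ (m+1) * K))) / d := by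
            rw [mul_pow]
            ring
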